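/- arXiv:2203.03353 — 3 statements merged into one kernel-verified Lean document; each statement's English description precedes it below -/
import Mathlib

section
/- Let n ≥ 2 and m ≥ 1, and let F ∈ ℝ^{n×m} and Q ∈ ℝ^{m×n} be row-stochastic matrices all of whose entries lie in the open interval (0,1). Suppose F has a nontrivial kernel, i.e., there exists x ≠ 0 in ℝ^m with Fx = 0. Then there exists a row-stochastic matrix Q̃ ∈ ℝ^{m×n} with Q̃ ≠ Q and F·Q = F·Q̃. In particular, the Markov chains with transition matrices FQ and FQ̃ coincide and therefore have the same stationary distributions. -/
open Matrix BigOperators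

/-- Different approximations can define the same Gibbs chain: if the
entries of the row-stochastic matrices `F` and `Q` lie in `(0,1)` and `F` has a
nontrivial kernel, then there is a row-stochastic `Qt ≠ Q` with `F * Q = F * Qt`. -/
theorem gibbs_chain_not_injective
    (n m : ℕ) (hn : 2 ≤ n) (hm : 1 ≤ m)
    (F : Matrix (Fin n) (Fin m) ℝ) (Q : Matrix (Fin m) (Fin n) ℝ)
    (hFmem : ∀ i j, F i j ∈ Set.Ioo (0 : ℝ) 1) (hFrow : ∀ i, ∑ j, F i j = 1)
    (hQmem : ∀ i j, Q i j ∈ Set.Ioo (0 : ℝ) 1) (hQrow : ∀ i, ∑ j, Q i j = 1)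
    (hker : ∃ x : Fin m → ℝ, x ≠ 0 ∧ F *ᵥ x = 0) :
    ∃ Qt : Matrix (Fin m) (Fin n) ℝ,
      (∀ i j, 0 ≤ Qt i j) ∧ (∀ i, ∑ j, Qt i j = 1) ∧ Qt ≠ Q ∧ F * Q = F * Qt := by
  obtain ⟨x, hx, hFx⟩ := hker
  haveI : NeZero m := ⟨by omega⟩
  haveI : NeZero n := ⟨by omega⟩
  -- the vector w = e₀ - e₁
  set j₀ : Fin n := ⟨0, by omega⟩ with hj₀
  set j₁ : Fin n := ⟨1, by omega⟩ with hj₁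
  have h01 : j₀ ≠ j₁ := by
    intro h
    have h2 := congrArg Fin.val h
    simp [hj₀, hj₁] at h2
  set w : Fin n → ℝ := fun j => (if j = j₀ then (1:ℝ) else 0) - (if j = j₁ then (1:ℝ) else 0)
    with hw
  have hwsum : ∑ j, w j = 0 := by
    simp [hw, Finset.sum_sub_distrib]
  have hwbd : ∀ j, |w j| ≤ 1 := by
    intro j
    simp only [hw]
    split_ifs with h h' h' <;> simp_all <;> norm_num
  -- bound on x
  obtain ⟨i₀, hi₀⟩ : ∃ i, x i ≠ 0 := by
    by_contra h
    push_neg at h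
    exact hx (funext fun i => h i)
  set M : ℝ := Finset.univ.sup' Finset.univ_nonempty (fun i => |x i|) with hM
  have hMpos : 0 < M := lt_of_lt_of_le (abs_pos.mpr hi₀)
    (Finset.le_sup' (fun i => |x i|) (Finset.mem_univ i₀))
  have hMx : ∀ i, |x i| ≤ M := fun i => Finset.le_sup' (fun i => |x i|) (Finset.mem_univ i)
  -- min of Q
  set c : ℝ := Finset.univ.inf' Finset.univ_nonempty
      (fun p : Fin m × Fin n => Q p.1 p.2) with hc
  have hcpos : 0 < c := by
    obtain ⟨p, _, hp⟩ := Finset.exists_mem_eq_inf' (Finset.univ_nonempty) (fun p : Fin m × Fin n => Q p.1 p.2)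
    rw [hc, hp]
    exact (hQmem p.1 p.2).1
  have hcQ : ∀ i j, c ≤ Q i j := fun i j =>
    Finset.inf'_le (fun p : Fin m × Fin n => Q p.1 p.2) (Finset.mem_univ (i, j))
  set ε : ℝ := c / (2 * M) with hε
  have hεpos : 0 < ε := div_pos hcpos (by positivity)
  refine ⟨fun i j => Q i j + ε * x i * w j, ?_, ?_, ?_, ?_⟩
  · intro i j
    have hbd : |ε * x i * w j| ≤ c / 2 := by
      calc |ε * x i * w j| = ε * |x i| * |w j| := by
            rw [abs_mul, abs_mul, abs_of_pos hεpos]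
        _ ≤ ε * M * 1 := by
            apply mul_le_mul (mul_le_mul le_rfl (hMx i) (abs_nonneg _) hεpos.le)
              (hwbd j) (abs_nonneg _) (by positivity)
        _ = c / 2 := by
            field_simp [hε]
            rw [hε, div_mul_eq_mul_div, div_mul_eq_mul_div, div_eq_iff (by positivity)]; ring
    have h3 := neg_abs_le (ε * x i * w j)
    show (0:ℝ) ≤ Q i j + ε * x i * w j
    nlinarith [hcQ i j]
  · intro i
    rw [Finset.sum_add_distrib, hQrow i, ← Finset.mul_sum, hwsum]
    ring
  · intro h
    have h2 := congrFun (congrFun h i₀) j₀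
    simp only [hw, if_pos rfl, if_neg h01, if_true, sub_zero, mul_one] at h2
    have : ε * x i₀ = 0 := by linarith
    rcases mul_eq_zero.mp this with h' | h'
    · exact hεpos.ne' h'
    · exact hi₀ h'
  · ext k j
    simp only [mul_apply]
    have hzero : ∑ i, F k i * x i = 0 := congrFun hFx k
    calc ∑ i, F k i * Q i j = ∑ i, F k i * Q i j + w j * ε * ∑ i, F k i * x i := by
          rw [hzero]; ring
      _ = ∑ i, F k i * (Q i j + ε * x i * w j) := by
          rw [Finset.mul_sum, ← Finset.sum_add_distrib]
          congr 1; ext i; ring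
end

section
/- Let M ∈ ℝ^{d×d} be symmetric positive definite and let n > 0 be a real number. Let D ∈ ℝ^{d×d} be the diagonal matrix whose diagonal entries are the diagonal entries of (M + nI)⁻¹. Then D is positive definite, and the matrix D⁻¹ − nI is positive definite; moreover its smallest eigenvalue satisfies λ_min(D⁻¹ − nI) ≥ λ_min(M) > 0. -/
open Matrix

section Aux

variable {d : ℕ}

/-- Rayleigh lower bound: the quadratic form dominates `c * ‖x‖²` if all eigenvalues are `≥ c`. -/
lemma aux_rayleigh_lower {A : Matrix (Fin d) (Fin d) ℝ} (hA : A.IsHermitian)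
    {c : ℝ} (hc : ∀ i, c ≤ hA.eigenvalues i) (x : Fin d → ℝ) :
    c * (x ⬝ᵥ x) ≤ x ⬝ᵥ (A *ᵥ x) := by
  set U : Matrix (Fin d) (Fin d) ℝ := (hA.eigenvectorUnitary : Matrix (Fin d) (Fin d) ℝ) with hU
  have hUmem : U ∈ Matrix.unitaryGroup (Fin d) ℝ := hA.eigenvectorUnitary.2
  have h1 : star U * U = 1 := hUmem.1
  have h2 : U * star U = 1 := hUmem.2
  set y : Fin d → ℝ := star U *ᵥ x with hy
  have key : ∀ z : Fin d → ℝ, x ⬝ᵥ (U *ᵥ z) = y ⬝ᵥ z := by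
    intro z
    rw [hy, Matrix.dotProduct_mulVec]
    congr 1
    show x ᵥ* U = star U *ᵥ x
    rw [show (star U : Matrix (Fin d) (Fin d) ℝ) = Uᵀ from rfl, Matrix.mulVec_transpose]
  have hxx : x ⬝ᵥ x = y ⬝ᵥ y := by
    have hx' : U *ᵥ y = x := by rw [hy, Matrix.mulVec_mulVec, h2, Matrix.one_mulVec]
    calc x ⬝ᵥ x = x ⬝ᵥ (U *ᵥ y) := by rw [hx']
      _ = y ⬝ᵥ y := key y
  have hquad : x ⬝ᵥ (A *ᵥ x) = ∑ i, hA.eigenvalues i * (y i)^2 := by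
    conv_lhs => rw [hA.spectral_theorem]
    simp only [Unitary.conjStarAlgAut_apply, Unitary.coe_star]
    rw [show (star (hA.eigenvectorUnitary : Matrix (Fin d) (Fin d) ℝ)) = star U from rfl]
    rw [← Matrix.mulVec_mulVec, ← Matrix.mulVec_mulVec, key]
    simp only [Matrix.mulVec_diagonal, dotProduct, Function.comp,
      RCLike.ofReal_real_eq_id, id]
    refine Finset.sum_congr rfl fun i _ => by ring
  rw [hquad, hxx, dotProduct, Finset.mul_sum]
  refine Finset.sum_le_sum fun i _ => ?_
  have : (0:ℝ) ≤ (y i)^2 := sq_nonneg _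
  calc c * (y i * y i) = c * (y i)^2 := by ring
    _ ≤ hA.eigenvalues i * (y i)^2 := mul_le_mul_of_nonneg_right (hc i) this
    _ = hA.eigenvalues i * (y i)^2 := rfl

/-- Eigenvalue lower bound from a quadratic-form bound. -/
lemma aux_eig_lower {A : Matrix (Fin d) (Fin d) ℝ} (hA : A.IsHermitian)
    {c : ℝ} (h : ∀ x : Fin d → ℝ, c * (x ⬝ᵥ x) ≤ x ⬝ᵥ (A *ᵥ x)) (i : Fin d) :
    c ≤ hA.eigenvalues i := by
  have hev := hA.eigenvalues_eq i
  set v : Fin d → ℝ := ⇑(hA.eigenvectorBasis i) with hv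
  have hvv : v ⬝ᵥ v = 1 := by
    have h1 : ‖hA.eigenvectorBasis i‖ = 1 := hA.eigenvectorBasis.orthonormal.1 i
    have h2 : (inner ℝ (hA.eigenvectorBasis i) (hA.eigenvectorBasis i) : ℝ)
        = star v ⬝ᵥ v := EuclideanSpace.inner_eq_star_dotProduct _ _
    rw [real_inner_self_eq_norm_sq, h1] at h2
    simpa using h2.symm
  have : hA.eigenvalues i = v ⬝ᵥ (A *ᵥ v) := by simpa using hev
  rw [this]
  calc c = c * (v ⬝ᵥ v) := by rw [hvv, mul_one]
    _ ≤ v ⬝ᵥ (A *ᵥ v) := h v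

end Aux

/-- For `M` symmetric positive definite and `n > 0`, the diagonal matrix
`D` of the diagonal entries of `(M + nI)⁻¹` is positive definite, `D⁻¹ − nI` is positive
definite, and `λ_min(D⁻¹ − nI) ≥ λ_min(M) > 0`. -/
theorem diag_inverse_precision_bound
    {d : ℕ} (hd : 1 ≤ d) (M : Matrix (Fin d) (Fin d) ℝ) (hM : M.PosDef)
    (n : ℝ) (hn : 0 < n)
    (D : Matrix (Fin d) (Fin d) ℝ)
    (hD : D = Matrix.diagonal (fun i => (M + n • (1 : Matrix (Fin d) (Fin d) ℝ))⁻¹ i i)) :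
    D.PosDef ∧
    ∃ hpd : (D⁻¹ - n • (1 : Matrix (Fin d) (Fin d) ℝ)).PosDef,
      (⨅ i, hM.1.eigenvalues i) ≤ (⨅ i, hpd.1.eigenvalues i) ∧
      0 < ⨅ i, hM.1.eigenvalues i := by
  haveI : Nonempty (Fin d) := ⟨⟨0, hd⟩⟩
  set c : ℝ := ⨅ i, hM.1.eigenvalues i with hc
  -- basic facts about c
  have hbdd : BddBelow (Set.range hM.1.eigenvalues) := Set.Finite.bddBelow (Set.finite_range _)
  have hcle : ∀ i, c ≤ hM.1.eigenvalues i := fun i => ciInf_le hbdd i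
  have hcpos : 0 < c := by
    obtain ⟨i, hi⟩ := Finite.exists_min hM.1.eigenvalues
    exact lt_of_lt_of_le (hM.eigenvalues_pos i) (le_ciInf hi)
  -- B := M + n I
  set B : Matrix (Fin d) (Fin d) ℝ := M + n • (1 : Matrix (Fin d) (Fin d) ℝ) with hB
  have hnI : (n • (1 : Matrix (Fin d) (Fin d) ℝ)).PosDef := by
    have : n • (1 : Matrix (Fin d) (Fin d) ℝ) = Matrix.diagonal (fun _ => n) := by
      rw [smul_eq_diagonal_mul]; simp
    rw [this]; exact Matrix.PosDef.diagonal fun _ => hn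
  have hBpd : B.PosDef := hM.add hnI
  have hBinv : B⁻¹.PosDef := hBpd.inv
  have hBunit : IsUnit B.det := isUnit_iff_ne_zero.2 (ne_of_gt hBpd.det_pos)
  -- quadratic form lower bound for B
  have hBquad : ∀ x : Fin d → ℝ, (c + n) * (x ⬝ᵥ x) ≤ x ⬝ᵥ (B *ᵥ x) := by
    intro x
    have h1 : c * (x ⬝ᵥ x) ≤ x ⬝ᵥ (M *ᵥ x) := aux_rayleigh_lower hM.1 hcle x
    have h2 : x ⬝ᵥ (B *ᵥ x) = x ⬝ᵥ (M *ᵥ x) + n * (x ⬝ᵥ x) := by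
      rw [hB, Matrix.add_mulVec, dotProduct_add, Matrix.smul_mulVec,
        Matrix.one_mulVec, dotProduct_smul]
      simp [smul_eq_mul]
    rw [h2]; nlinarith [h1]
  -- diagonal entries of B⁻¹
  set a : Fin d → ℝ := fun i => B⁻¹ i i with ha
  have hapos : ∀ i, 0 < a i := by
    intro i
    have hx : (Pi.single i 1 : Fin d → ℝ) ≠ 0 := by
      intro h
      have := congrFun h i
      simp at this
    have := hBinv.dotProduct_mulVec_pos hx
    simpa [Matrix.mulVec_single, dotProduct, Pi.single_apply,
      Finset.sum_ite_eq'] using this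
  -- key bound: a i ≤ 1/(c+n)
  have hcn : 0 < c + n := by linarith
  have hkey : ∀ i, c ≤ (a i)⁻¹ - n := by
    intro i
    set y : Fin d → ℝ := B⁻¹ *ᵥ (Pi.single i 1) with hy
    have hyi : y i = a i := by
      simp [hy, Matrix.mulVec_single, ha]
    have hBy : B *ᵥ y = Pi.single i 1 := by
      rw [hy, Matrix.mulVec_mulVec, Matrix.mul_nonsing_inv _ hBunit, Matrix.one_mulVec]
    have hyBy : y ⬝ᵥ (B *ᵥ y) = a i := by
      rw [hBy, dotProduct, ← hyi]
      simp [Pi.single_apply, Finset.sum_ite_eq', mul_comm]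
    have hyy : (y i)^2 ≤ y ⬝ᵥ y := by
      rw [dotProduct]
      have : (y i)^2 = y i * y i := sq (y i)
      rw [this]
      exact Finset.single_le_sum (f := fun j => y j * y j)
        (fun j _ => mul_self_nonneg _) (Finset.mem_univ i)
    have hlb := hBquad y
    rw [hyBy] at hlb
    have h1 : (c + n) * (a i)^2 ≤ a i := by
      calc (c + n) * (a i)^2 = (c + n) * (y i)^2 := by rw [hyi]
        _ ≤ (c + n) * (y ⬝ᵥ y) := mul_le_mul_of_nonneg_left hyy hcn.le
        _ ≤ a i := hlb
    have hai := hapos i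
    have h2 : (c + n) * a i ≤ 1 := by nlinarith
    have h3 : c + n ≤ (a i)⁻¹ := by
      rw [le_inv_comm₀ hcn hai] at *
      · rw [inv_eq_one_div]
        rw [le_div_iff₀ hcn]
        nlinarith
    linarith
  -- D is positive definite
  have hDdiag : D = Matrix.diagonal a := hD
  have hDpd : D.PosDef := by rw [hDdiag]; exact Matrix.PosDef.diagonal hapos
  refine ⟨hDpd, ?_⟩
  -- D⁻¹ - n I is diagonal with entries (a i)⁻¹ - n
  have hDinv : D⁻¹ = Matrix.diagonal (fun i => (a i)⁻¹) := by
    rw [hDdiag, Matrix.inv_diagonal]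
    have hu : IsUnit a := by
      refine isUnit_iff_exists.2 ⟨fun i => (a i)⁻¹, ?_, ?_⟩
      · funext i
        exact mul_inv_cancel₀ (ne_of_gt (hapos i))
      · funext i
        exact inv_mul_cancel₀ (ne_of_gt (hapos i))
    obtain ⟨u, hu⟩ := hu
    have h2 : (u : Fin d → ℝ) * (fun j => (a j)⁻¹) = 1 := by
      funext j
      show (u : Fin d → ℝ) j * (a j)⁻¹ = 1
      rw [hu]
      exact mul_inv_cancel₀ (ne_of_gt (hapos j))
    have h3 : Ring.inverse a = fun j => (a j)⁻¹ :=
      calc Ring.inverse a = Ring.inverse (u : Fin d → ℝ) := by rw [hu]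
        _ = ((u⁻¹ : (Fin d → ℝ)ˣ) : Fin d → ℝ) := Ring.inverse_unit u
        _ = fun j => (a j)⁻¹ := Units.inv_eq_of_mul_eq_one_right h2
    rw [h3]
  have hsub : D⁻¹ - n • (1 : Matrix (Fin d) (Fin d) ℝ) =
      Matrix.diagonal (fun i => (a i)⁻¹ - n) := by
    rw [hDinv]
    have : n • (1 : Matrix (Fin d) (Fin d) ℝ) = Matrix.diagonal (fun _ => n) := by
      rw [smul_eq_diagonal_mul]; simp
    rw [this, Matrix.diagonal_sub]
  have hentry : ∀ i, 0 < (a i)⁻¹ - n := fun i => lt_of_lt_of_le hcpos (hkey i)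
  have hpd : (D⁻¹ - n • (1 : Matrix (Fin d) (Fin d) ℝ)).PosDef := by
    rw [hsub]; exact Matrix.PosDef.diagonal hentry
  refine ⟨hpd, ?_, hcpos⟩
  -- eigenvalue bound
  refine le_ciInf fun i => ?_
  refine aux_eig_lower hpd.1 (fun x => ?_) i
  have hqf : x ⬝ᵥ ((D⁻¹ - n • (1 : Matrix (Fin d) (Fin d) ℝ)) *ᵥ x)
      = ∑ j, ((a j)⁻¹ - n) * (x j)^2 := by
    rw [hsub]
    simp only [Matrix.mulVec_diagonal, dotProduct]
    exact Finset.sum_congr rfl fun j _ => by ring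
  rw [hqf, dotProduct, Finset.mul_sum]
  refine Finset.sum_le_sum fun j _ => ?_
  have h1 : c ≤ (a j)⁻¹ - n := hkey j
  nlinarith [sq_nonneg (x j)]
end

section
/- Let μ₀ ∈ ℝ^d, let Σ₀, Σ_l, Σ_q ∈ ℝ^{d×d} be symmetric positive definite, and let n ≥ 1. Set Σ_n := (Σ₀⁻¹ + nΣ_l⁻¹)⁻¹, a := Σ_nΣ₀⁻¹μ₀, A := nΣ_nΣ_l⁻¹, and B := Σ_q + nΣ_nΣ_l⁻¹Σ_n. Suppose Σ_G ∈ ℝ^{d×d} is symmetric positive definite and satisfies the Lyapunov equation A Σ_G Aᵀ − Σ_G + B = 0. Then the Gaussian density N(·; μ₀, Σ_G) is a stationary density of the Gibbs chain with transition density r(θ'|θ) = N(θ'; a + Aθ, B): for all θ' ∈ ℝ^d, ∫_{ℝ^d} N(θ'; a + Aθ, B) · N(θ; μ₀, Σ_G) dθ = N(θ'; μ₀, Σ_G). In particular, the Gibbs prior of this Gaussian model has mean equal to the prior mean μ₀ and covariance Σ_G solving the Lyapunov equation. -/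
open Matrix MeasureTheory

/-! ### Auxiliary lemmas -/

lemma psd_det_nonneg' {d : ℕ} {M : Matrix (Fin d) (Fin d) ℝ} (hM : M.PosSemidef) : 0 ≤ M.det := by
  exact hM.det_nonneg

open scoped MatrixOrder in
lemma posdef_sqrt_exists' {d : ℕ} {M : Matrix (Fin d) (Fin d) ℝ} (hM : M.PosDef) :
    ∃ S : Matrix (Fin d) (Fin d) ℝ, S * S = M ∧ Sᵀ = S ∧ 0 < S.det := by
  refine ⟨CFC.sqrt M, CFC.sqrt_mul_sqrt_self M hM.posSemidef.nonneg,
    (CFC.sqrt_nonneg M).posSemidef.isHermitian.eq, ?_⟩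
  have hdet2 : (CFC.sqrt M).det * (CFC.sqrt M).det = M.det := by
    rw [← det_mul, CFC.sqrt_mul_sqrt_self M hM.posSemidef.nonneg]
  have hSnn : 0 ≤ (CFC.sqrt M).det :=
    psd_det_nonneg' (CFC.sqrt_nonneg M).posSemidef
  rcases hSnn.lt_or_eq with h | h
  · exact h
  · exfalso; rw [← h] at hdet2; have := hM.det_pos; simp at hdet2; linarith

lemma oned_gauss' : ∫ t : ℝ, Real.exp (-(1/2) * (t * t)) = Real.sqrt (2 * Real.pi) := by
  have h := integral_gaussian (1/2)
  norm_num at h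
  calc ∫ t : ℝ, Real.exp (-(1/2) * (t * t)) = ∫ t : ℝ, Real.exp (-(1/2 * t ^ 2)) := by
        congr 1; funext t; congr 1; ring
    _ = Real.sqrt (2 * Real.pi) := by
        rw [h, ← Real.sqrt_mul (by positivity), mul_comm]

lemma integral_comp_matrix' {d : ℕ} {S : Matrix (Fin d) (Fin d) ℝ} (hS : S.det ≠ 0)
    {f : (Fin d → ℝ) → ℝ} (hf : Continuous f) :
    ∫ x : Fin d → ℝ, f (S *ᵥ x) = |S.det|⁻¹ * ∫ y : Fin d → ℝ, f y := by
  have hmeas : AEMeasurable (Matrix.toLin' S) (volume : Measure (Fin d → ℝ)) :=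
    (LinearMap.continuous_on_pi _).measurable.aemeasurable
  have h1 : ∫ x : Fin d → ℝ, f (S *ᵥ x)
      = ∫ y, f y ∂(Measure.map (Matrix.toLin' S) volume) := by
    rw [integral_map hmeas hf.aestronglyMeasurable]
    simp only [Matrix.toLin'_apply]
  rw [h1, Real.map_matrix_volume_pi_eq_smul_volume_pi hS, integral_smul_measure,
    ENNReal.toReal_ofReal (abs_nonneg _), abs_inv, smul_eq_mul]

lemma integral_std_gauss' (d : ℕ) :
    ∫ y : Fin d → ℝ, Real.exp (-(1/2) * (y ⬝ᵥ y)) = (Real.sqrt (2 * Real.pi)) ^ d := by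
  calc ∫ y : Fin d → ℝ, Real.exp (-(1/2) * (y ⬝ᵥ y))
      = ∫ y : Fin d → ℝ, ∏ i, Real.exp (-(1/2) * (y i * y i)) := by
        congr 1; funext y
        rw [← Real.exp_sum]
        congr 1
        simp [dotProduct, Finset.mul_sum]
    _ = (∫ t : ℝ, Real.exp (-(1/2) * (t * t))) ^ (Fintype.card (Fin d)) :=
        MeasureTheory.integral_fintype_prod_eq_pow (ι := Fin d)
          (fun t : ℝ => Real.exp (-(1/2) * (t * t)))
    _ = (Real.sqrt (2 * Real.pi)) ^ d := by rw [oned_gauss', Fintype.card_fin]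

/-- The multivariate Gaussian integral for a positive definite quadratic form. -/
lemma integral_gauss_quad' {d : ℕ} {M : Matrix (Fin d) (Fin d) ℝ} (hM : M.PosDef) :
    ∫ x : Fin d → ℝ, Real.exp (-(1/2) * (x ⬝ᵥ (M *ᵥ x)))
      = (2 * Real.pi) ^ ((d : ℝ) / 2) * M.det ^ (-(1 : ℝ) / 2) := by
  obtain ⟨S, hSS, hSsym, hSpos⟩ := posdef_sqrt_exists' hM
  have hdet2 : S.det * S.det = M.det := by rw [← det_mul, hSS]
  have hexp : ∀ x : Fin d → ℝ, x ⬝ᵥ (M *ᵥ x) = (S *ᵥ x) ⬝ᵥ (S *ᵥ x) := by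
    intro x
    rw [← hSS, ← mulVec_mulVec, dotProduct_mulVec, ← mulVec_transpose, hSsym]
  have hfc : Continuous (fun y : Fin d → ℝ => Real.exp (-(1/2) * (y ⬝ᵥ y))) := by
    have : (fun y : Fin d → ℝ => Real.exp (-(1/2) * (y ⬝ᵥ y)))
        = fun y => Real.exp (-(1/2) * ∑ i, y i * y i) := rfl
    rw [this]
    exact Real.continuous_exp.comp (continuous_const.mul
      (continuous_finset_sum _ fun i _ => (continuous_apply i).mul (continuous_apply i)))
  calc ∫ x : Fin d → ℝ, Real.exp (-(1/2) * (x ⬝ᵥ (M *ᵥ x)))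
      = ∫ x : Fin d → ℝ, (fun y => Real.exp (-(1/2) * (y ⬝ᵥ y))) (S *ᵥ x) := by
        congr 1; funext x; simp only [hexp x]
    _ = |S.det|⁻¹ * ∫ y : Fin d → ℝ, Real.exp (-(1/2) * (y ⬝ᵥ y)) :=
        integral_comp_matrix' (ne_of_gt hSpos) hfc
    _ = (2 * Real.pi) ^ ((d : ℝ) / 2) * M.det ^ (-(1 : ℝ) / 2) := by
        rw [integral_std_gauss', abs_of_pos hSpos]
        have h2pi : (0:ℝ) < 2 * Real.pi := by positivity
        have hsq : (Real.sqrt (2 * Real.pi)) ^ d = (2 * Real.pi) ^ ((d : ℝ)/2) := by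
          rw [Real.sqrt_eq_rpow, ← Real.rpow_natCast ((2*Real.pi) ^ ((1:ℝ)/2)) d,
            ← Real.rpow_mul h2pi.le]
          congr 1; ring
        have hdetr : (S.det)⁻¹ = M.det ^ (-(1 : ℝ)/2) := by
          rw [← hdet2, ← sq, ← Real.rpow_natCast S.det 2, ← Real.rpow_mul hSpos.le]
          norm_num [Real.rpow_neg_one]
        rw [hsq, hdetr]; ring

lemma posDef_smul' {d : ℕ} {M : Matrix (Fin d) (Fin d) ℝ} (hM : M.PosDef) {c : ℝ}
    (hc : 0 < c) : (c • M).PosDef := by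
  refine .of_dotProduct_mulVec_pos ?_ (fun x hx => ?_)
  · have h1 := hM.1
    unfold Matrix.IsHermitian at h1 ⊢
    rw [conjTranspose_smul, h1, star_trivial]
  · have h := hM.dotProduct_mulVec_pos hx
    rw [smul_mulVec, dotProduct_smul, smul_eq_mul]
    exact mul_pos hc h

lemma posSemidef_smul' {d : ℕ} {M : Matrix (Fin d) (Fin d) ℝ} (hM : M.PosSemidef) {c : ℝ}
    (hc : 0 ≤ c) : (c • M).PosSemidef := by
  refine .of_dotProduct_mulVec_nonneg ?_ (fun x => ?_)
  · have h1 := hM.1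
    unfold Matrix.IsHermitian at h1 ⊢
    rw [conjTranspose_smul, h1, star_trivial]
  · have h := hM.dotProduct_mulVec_nonneg x
    rw [smul_mulVec, dotProduct_smul, smul_eq_mul]
    exact mul_nonneg hc h

lemma dot_trans' {d : ℕ} (N : Matrix (Fin d) (Fin d) ℝ) (x y : Fin d → ℝ) :
    x ⬝ᵥ (N *ᵥ y) = y ⬝ᵥ (Nᵀ *ᵥ x) := by
  rw [dotProduct_mulVec, ← mulVec_transpose, dotProduct_comm]

lemma quad_expand' {d : ℕ} {M : Matrix (Fin d) (Fin d) ℝ} (hM : Mᵀ = M) (x y : Fin d → ℝ) :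
    (x - y) ⬝ᵥ (M *ᵥ (x - y))
      = x ⬝ᵥ (M *ᵥ x) - 2 * (x ⬝ᵥ (M *ᵥ y)) + y ⬝ᵥ (M *ᵥ y) := by
  have hsymm : y ⬝ᵥ (M *ᵥ x) = x ⬝ᵥ (M *ᵥ y) := by rw [dot_trans', hM]
  rw [mulVec_sub, sub_dotProduct, dotProduct_sub, dotProduct_sub, hsymm]
  ring

lemma gaussDensity_norm' {d : ℕ} (m : Fin d → ℝ) {S : Matrix (Fin d) (Fin d) ℝ}
    (hS : S.PosDef) :
    ∫ x : Fin d → ℝ, (2 * Real.pi) ^ (-(d : ℝ) / 2) * S.det ^ (-(1 : ℝ) / 2) *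
      Real.exp (-(1 / 2) * ((x - m) ⬝ᵥ (S⁻¹ *ᵥ (x - m)))) = 1 := by
  rw [integral_const_mul]
  have hshift : ∫ x : Fin d → ℝ, Real.exp (-(1 / 2) * ((x - m) ⬝ᵥ (S⁻¹ *ᵥ (x - m))))
      = ∫ x : Fin d → ℝ, Real.exp (-(1 / 2) * (x ⬝ᵥ (S⁻¹ *ᵥ x))) :=
    integral_sub_right_eq_self (fun x => Real.exp (-(1 / 2) * (x ⬝ᵥ (S⁻¹ *ᵥ x)))) m
  rw [hshift, integral_gauss_quad' hS.inv]
  have hdp : 0 < S.det := hS.det_pos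
  have h2pi : (0:ℝ) < 2 * Real.pi := by positivity
  have hdi : S⁻¹.det = S.det⁻¹ := by
    rw [Matrix.det_nonsing_inv, Ring.inverse_eq_inv']
  rw [hdi, ← Real.rpow_neg_one S.det, ← Real.rpow_mul hdp.le]
  norm_num
  rw [mul_mul_mul_comm, ← Real.rpow_add h2pi, ← Real.rpow_add hdp]
  norm_num
  rw [show (-(d:ℝ)/2 + (d:ℝ)/2) = 0 by ring, Real.rpow_zero]

/-- The multivariate Gaussian density `N(x; μ, Σ)` on `ℝ^d`. -/
noncomputable def gaussDensity {d : ℕ} (μ : Fin d → ℝ) (S : Matrix (Fin d) (Fin d) ℝ)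
    (x : Fin d → ℝ) : ℝ :=
  (2 * Real.pi) ^ (-(d : ℝ) / 2) * S.det ^ (-(1 : ℝ) / 2) *
    Real.exp (-(1 / 2) * ((x - μ) ⬝ᵥ (S⁻¹ *ᵥ (x - μ))))

/-- If `Σ_G` is symmetric positive definite and solves the Lyapunov
equation `AΣ_GAᵀ − Σ_G + B = 0`, then `N(·; μ₀, Σ_G)` is a stationary density of the
Gibbs chain with transition density `r(θ'|θ) = N(θ'; a + Aθ, B)`: the Gibbs prior of
the Gaussian model is `N(μ₀, Σ_G)`. -/
theorem gibbs_prior_gaussian_stationary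
    {d : ℕ} (μ₀ : Fin d → ℝ) (S0 Sl Sq : Matrix (Fin d) (Fin d) ℝ)
    (hS0 : S0.PosDef) (hSl : Sl.PosDef) (hSq : Sq.PosDef)
    (n : ℕ) (hn : 1 ≤ n)
    (Sn : Matrix (Fin d) (Fin d) ℝ) (hSn : Sn = (S0⁻¹ + (n : ℝ) • Sl⁻¹)⁻¹)
    (a : Fin d → ℝ) (ha : a = Sn *ᵥ (S0⁻¹ *ᵥ μ₀))
    (A : Matrix (Fin d) (Fin d) ℝ) (hA : A = (n : ℝ) • (Sn * Sl⁻¹))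
    (B : Matrix (Fin d) (Fin d) ℝ) (hB : B = Sq + (n : ℝ) • (Sn * Sl⁻¹ * Sn))
    (SG : Matrix (Fin d) (Fin d) ℝ) (hSG : SG.PosDef)
    (hLyap : A * SG * Aᵀ - SG + B = 0) :
    ∀ θ' : Fin d → ℝ,
      ∫ θ : Fin d → ℝ, gaussDensity (a + A *ᵥ θ) B θ' * gaussDensity μ₀ SG θ =
        gaussDensity μ₀ SG θ' := by
  intro θ'
  have hnpos : (0:ℝ) < (n:ℝ) := by exact_mod_cast hn
  -- positive definiteness of the relevant matrices
  have hKpd : (S0⁻¹ + (n:ℝ) • Sl⁻¹).PosDef := hS0.inv.add (posDef_smul' hSl.inv hnpos)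
  have hSnpd : Sn.PosDef := hSn ▸ hKpd.inv
  have hBpd : B.PosDef := by
    rw [hB]
    refine hSq.add_posSemidef (posSemidef_smul' ?_ hnpos.le)
    have h := (hSl.inv.posSemidef).mul_mul_conjTranspose_same Sn
    rwa [hSnpd.isHermitian.eq] at h
  -- the fixed point property of the mean
  have hKdet : IsUnit (S0⁻¹ + (n:ℝ) • Sl⁻¹).det := isUnit_iff_ne_zero.mpr hKpd.det_pos.ne'
  have hKinv : Sn * (S0⁻¹ + (n:ℝ) • Sl⁻¹) = 1 := by
    rw [hSn]; exact nonsing_inv_mul _ hKdet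
  have hfix : a + A *ᵥ μ₀ = μ₀ := by
    calc a + A *ᵥ μ₀ = (Sn * S0⁻¹ + (n:ℝ) • (Sn * Sl⁻¹)) *ᵥ μ₀ := by
          rw [ha, hA, add_mulVec, mulVec_mulVec]
      _ = (Sn * (S0⁻¹ + (n:ℝ) • Sl⁻¹)) *ᵥ μ₀ := by rw [mul_add, mul_smul_comm]
      _ = μ₀ := by rw [hKinv, one_mulVec]
  -- abbreviations (spelled out): P = B⁻¹, Q = SG⁻¹, C
  have hPpd : (B⁻¹).PosDef := hBpd.inv
  have hQpd : (SG⁻¹).PosDef := hSG.inv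
  have hPsym : (B⁻¹)ᵀ = B⁻¹ := hPpd.isHermitian.eq
  have hQsym : (SG⁻¹)ᵀ = SG⁻¹ := hQpd.isHermitian.eq
  have hCpd : (Aᵀ * B⁻¹ * A + SG⁻¹).PosDef := by
    refine Matrix.PosDef.posSemidef_add ?_ hQpd
    have h := (hPpd.posSemidef).mul_mul_conjTranspose_same Aᵀ
    rwa [show Aᵀᴴ = A by ext i j; simp] at h
  have hCsym : (Aᵀ * B⁻¹ * A + SG⁻¹)ᵀ = Aᵀ * B⁻¹ * A + SG⁻¹ := hCpd.isHermitian.eq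
  have hCinvsym : ((Aᵀ * B⁻¹ * A + SG⁻¹)⁻¹)ᵀ = (Aᵀ * B⁻¹ * A + SG⁻¹)⁻¹ :=
    hCpd.inv.isHermitian.eq
  have hCdet : IsUnit (Aᵀ * B⁻¹ * A + SG⁻¹).det := isUnit_iff_ne_zero.mpr hCpd.det_pos.ne'
  have hBdet : IsUnit B.det := isUnit_iff_ne_zero.mpr hBpd.det_pos.ne'
  have hSGdet : IsUnit SG.det := isUnit_iff_ne_zero.mpr hSG.det_pos.ne'
  have hBP : B * B⁻¹ = 1 := mul_nonsing_inv _ hBdet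
  have hSGQ : SG * SG⁻¹ = 1 := mul_nonsing_inv _ hSGdet
  have hQSG : SG⁻¹ * SG = 1 := nonsing_inv_mul _ hSGdet
  have hCC : (Aᵀ * B⁻¹ * A + SG⁻¹) * (Aᵀ * B⁻¹ * A + SG⁻¹)⁻¹ = 1 := mul_nonsing_inv _ hCdet
  have hCinvinv : (Aᵀ * B⁻¹ * A + SG⁻¹)⁻¹⁻¹ = Aᵀ * B⁻¹ * A + SG⁻¹ :=
    nonsing_inv_nonsing_inv _ hCdet
  have h1 : A * SG * Aᵀ + B = SG := by
    rw [← sub_eq_zero, ← hLyap]; abel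
  -- Woodbury identity
  have h3 : SG * (Aᵀ * B⁻¹ * A) = SG * (Aᵀ * B⁻¹ * A + SG⁻¹) - 1 := by
    rw [mul_add, hSGQ, add_sub_cancel_right]
  have h4 : SG * (Aᵀ * B⁻¹ * A) * (Aᵀ * B⁻¹ * A + SG⁻¹)⁻¹
      = SG - (Aᵀ * B⁻¹ * A + SG⁻¹)⁻¹ := by
    rw [h3, sub_mul, one_mul, mul_assoc, hCC, mul_one]
  have hW : SG⁻¹ = B⁻¹ - B⁻¹ * A * (Aᵀ * B⁻¹ * A + SG⁻¹)⁻¹ * (Aᵀ * B⁻¹) := by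
    refine Matrix.inv_eq_right_inv ?_
    calc SG * (B⁻¹ - B⁻¹ * A * (Aᵀ * B⁻¹ * A + SG⁻¹)⁻¹ * (Aᵀ * B⁻¹))
        = (A * SG * Aᵀ + B) * (B⁻¹ - B⁻¹ * A * (Aᵀ * B⁻¹ * A + SG⁻¹)⁻¹ * (Aᵀ * B⁻¹)) := by
          rw [h1]
      _ = A * (SG * (Aᵀ * B⁻¹)) + B * B⁻¹
          - A * (SG * (Aᵀ * B⁻¹ * A) * (Aᵀ * B⁻¹ * A + SG⁻¹)⁻¹) * (Aᵀ * B⁻¹)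
          - (B * B⁻¹) * (A * ((Aᵀ * B⁻¹ * A + SG⁻¹)⁻¹ * (Aᵀ * B⁻¹))) := by noncomm_ring
      _ = A * (SG * (Aᵀ * B⁻¹)) + 1
          - A * (SG - (Aᵀ * B⁻¹ * A + SG⁻¹)⁻¹) * (Aᵀ * B⁻¹)
          - 1 * (A * ((Aᵀ * B⁻¹ * A + SG⁻¹)⁻¹ * (Aᵀ * B⁻¹))) := by rw [h4, hBP]
      _ = 1 := by noncomm_ring
  -- determinant identity : det B * det C = 1
  have e1 : Aᵀ * B⁻¹ * A + SG⁻¹ = SG⁻¹ * (1 + (SG * Aᵀ * B⁻¹) * A) := by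
    have h5 : SG⁻¹ * ((SG * Aᵀ * B⁻¹) * A) = Aᵀ * B⁻¹ * A := by
      calc SG⁻¹ * ((SG * Aᵀ * B⁻¹) * A) = (SG⁻¹ * SG) * (Aᵀ * B⁻¹ * A) := by noncomm_ring
        _ = Aᵀ * B⁻¹ * A := by rw [hQSG, one_mul]
    rw [mul_add, mul_one, h5, add_comm]
  have e2 : (1 : Matrix (Fin d) (Fin d) ℝ) + A * (SG * Aᵀ * B⁻¹) = SG * B⁻¹ := by
    calc (1 : Matrix (Fin d) (Fin d) ℝ) + A * (SG * Aᵀ * B⁻¹)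
        = (B * B⁻¹) + A * (SG * Aᵀ * B⁻¹) := by rw [hBP]
      _ = (A * SG * Aᵀ + B) * B⁻¹ := by noncomm_ring
      _ = SG * B⁻¹ := by rw [h1]
  have hdetBC : B.det * (Aᵀ * B⁻¹ * A + SG⁻¹).det = 1 := by
    have e3 : (Aᵀ * B⁻¹ * A + SG⁻¹).det = (SG⁻¹).det * (SG.det * (B⁻¹).det) := by
      rw [e1, det_mul, det_one_add_mul_comm, e2, det_mul]
    rw [e3]
    have e4 : (SG⁻¹).det * SG.det = 1 := by rw [← det_mul, hQSG, det_one]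
    have e5 : B.det * (B⁻¹).det = 1 := by rw [← det_mul, hBP, det_one]
    calc B.det * ((SG⁻¹).det * (SG.det * (B⁻¹).det))
        = ((SG⁻¹).det * SG.det) * (B.det * (B⁻¹).det) := by ring
      _ = 1 := by rw [e4, e5, one_mul]
  -- the shifted mean
  set w : Fin d → ℝ := (Aᵀ * B⁻¹ * A + SG⁻¹)⁻¹ *ᵥ (Aᵀ *ᵥ (B⁻¹ *ᵥ (θ' - μ₀))) with hw
  -- pointwise identity
  have hpoint : ∀ θ : Fin d → ℝ,
      gaussDensity (a + A *ᵥ θ) B θ' * gaussDensity μ₀ SG θ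
        = gaussDensity μ₀ SG θ' * gaussDensity (μ₀ + w) (Aᵀ * B⁻¹ * A + SG⁻¹)⁻¹ θ := by
    intro θ
    unfold gaussDensity
    have hdC : ((Aᵀ * B⁻¹ * A + SG⁻¹)⁻¹).det = B.det := by
      have : (Aᵀ * B⁻¹ * A + SG⁻¹).det = (B.det)⁻¹ := by
        exact eq_inv_of_mul_eq_one_right hdetBC
      rw [Matrix.det_nonsing_inv, Ring.inverse_eq_inv', this, inv_inv]
    rw [hdC, hCinvinv]
    -- exponent identity
    have h5 : θ' - (a + A *ᵥ θ) = (θ' - μ₀) - A *ᵥ (θ - μ₀) := by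
      rw [mulVec_sub, show θ' - μ₀ = θ' - (a + A *ᵥ μ₀) by rw [hfix]]
      abel
    have h6 : θ - (μ₀ + w) = (θ - μ₀) - w := by abel
    set u : Fin d → ℝ := θ - μ₀ with hu
    set v : Fin d → ℝ := θ' - μ₀ with hv
    have hcross : v ⬝ᵥ (B⁻¹ *ᵥ (A *ᵥ u)) = u ⬝ᵥ ((Aᵀ * B⁻¹) *ᵥ v) := by
      rw [mulVec_mulVec, dot_trans', transpose_mul, hPsym]
    have hAuAu : (A *ᵥ u) ⬝ᵥ (B⁻¹ *ᵥ (A *ᵥ u)) = u ⬝ᵥ ((Aᵀ * B⁻¹ * A) *ᵥ u) := by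
      rw [mulVec_mulVec, dot_trans', transpose_mul, hPsym, mulVec_mulVec]
    have hCw : (Aᵀ * B⁻¹ * A + SG⁻¹) *ᵥ w = (Aᵀ * B⁻¹) *ᵥ v := by
      rw [hw, mulVec_mulVec, hCC, one_mulVec, mulVec_mulVec]
    have hwCw : w ⬝ᵥ ((Aᵀ * B⁻¹ * A + SG⁻¹) *ᵥ w)
        = v ⬝ᵥ ((B⁻¹ * A * (Aᵀ * B⁻¹ * A + SG⁻¹)⁻¹ * (Aᵀ * B⁻¹)) *ᵥ v) := by
      rw [hCw, hw, mulVec_mulVec, mulVec_mulVec, dot_trans']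
      simp only [transpose_mul, transpose_transpose, hPsym, hCinvsym, mulVec_mulVec]
      congr 2
      noncomm_ring
    have huCu : u ⬝ᵥ ((Aᵀ * B⁻¹ * A + SG⁻¹) *ᵥ u)
        = u ⬝ᵥ ((Aᵀ * B⁻¹ * A) *ᵥ u) + u ⬝ᵥ (SG⁻¹ *ᵥ u) := by
      rw [add_mulVec, dotProduct_add]
    have hvPv : v ⬝ᵥ (B⁻¹ *ᵥ v) = v ⬝ᵥ (SG⁻¹ *ᵥ v)
        + v ⬝ᵥ ((B⁻¹ * A * (Aᵀ * B⁻¹ * A + SG⁻¹)⁻¹ * (Aᵀ * B⁻¹)) *ᵥ v) := by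
      have hPQ : B⁻¹ = SG⁻¹ + B⁻¹ * A * (Aᵀ * B⁻¹ * A + SG⁻¹)⁻¹ * (Aᵀ * B⁻¹) :=
        (eq_sub_iff_add_eq.mp hW).symm
      calc v ⬝ᵥ (B⁻¹ *ᵥ v)
          = v ⬝ᵥ ((SG⁻¹ + B⁻¹ * A * (Aᵀ * B⁻¹ * A + SG⁻¹)⁻¹ * (Aᵀ * B⁻¹)) *ᵥ v) := by
            rw [← hPQ]
        _ = _ := by rw [add_mulVec, dotProduct_add]
    have hquad : (θ' - (a + A *ᵥ θ)) ⬝ᵥ (B⁻¹ *ᵥ (θ' - (a + A *ᵥ θ)))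
          + (θ - μ₀) ⬝ᵥ (SG⁻¹ *ᵥ (θ - μ₀))
        = (θ' - μ₀) ⬝ᵥ (SG⁻¹ *ᵥ (θ' - μ₀))
          + (θ - (μ₀ + w)) ⬝ᵥ ((Aᵀ * B⁻¹ * A + SG⁻¹) *ᵥ (θ - (μ₀ + w))) := by
      rw [h5, h6]
      rw [quad_expand' hPsym v (A *ᵥ u), quad_expand' hCsym u w]
      rw [hcross, hAuAu]
      have hucw : u ⬝ᵥ ((Aᵀ * B⁻¹ * A + SG⁻¹) *ᵥ w) = u ⬝ᵥ ((Aᵀ * B⁻¹) *ᵥ v) := by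
        rw [hCw]
      -- express u side terms
      have huw : u ⬝ᵥ ((Aᵀ * B⁻¹ * A + SG⁻¹) *ᵥ w) = u ⬝ᵥ ((Aᵀ * B⁻¹) *ᵥ v) := hucw
      rw [huw, hwCw, huCu, hvPv]
      ring
    -- combine: constants equal, exponents equal
    have hE : Real.exp (-(1/2) * ((θ' - (a + A *ᵥ θ)) ⬝ᵥ (B⁻¹ *ᵥ (θ' - (a + A *ᵥ θ)))))
          * Real.exp (-(1/2) * ((θ - μ₀) ⬝ᵥ (SG⁻¹ *ᵥ (θ - μ₀))))
        = Real.exp (-(1/2) * ((θ' - μ₀) ⬝ᵥ (SG⁻¹ *ᵥ (θ' - μ₀))))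
          * Real.exp (-(1/2) * ((θ - (μ₀ + w)) ⬝ᵥ ((Aᵀ * B⁻¹ * A + SG⁻¹) *ᵥ (θ - (μ₀ + w))))) := by
      rw [← Real.exp_add, ← Real.exp_add]
      congr 1
      linear_combination (-(1:ℝ)/2) * hquad
    linear_combination ((2 * Real.pi) ^ (-(d:ℝ)/2) * (2 * Real.pi) ^ (-(d:ℝ)/2)
      * B.det ^ (-(1:ℝ)/2) * SG.det ^ (-(1:ℝ)/2)) * hE
  calc ∫ θ : Fin d → ℝ, gaussDensity (a + A *ᵥ θ) B θ' * gaussDensity μ₀ SG θ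
      = ∫ θ : Fin d → ℝ, gaussDensity μ₀ SG θ'
          * gaussDensity (μ₀ + w) (Aᵀ * B⁻¹ * A + SG⁻¹)⁻¹ θ := by
        simp only [hpoint]
    _ = gaussDensity μ₀ SG θ'
          * ∫ θ : Fin d → ℝ, gaussDensity (μ₀ + w) (Aᵀ * B⁻¹ * A + SG⁻¹)⁻¹ θ :=
        integral_const_mul _ _
    _ = gaussDensity μ₀ SG θ' := by
        have := gaussDensity_norm' (μ₀ + w) hCpd.inv
        unfold gaussDensity
        rw [this, mul_one]
end
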